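/- Let alpha in F_{q^{mn}} with F_{q^{mn}} = F_q(alpha) and let x in F_{q^{mn}} be nonzero. Then S(alpha,m,n;q) = |S_alpha^x| * (q^{mn}-1)/(q^m-1), where S_alpha^x is the (nonempty) set of m-dimensional alpha-splitting subspaces containing x and S(alpha,m,n;q) is the total number of m-dimensional alpha-splitting subspaces. -/

import Mathlib

open Pointwise Polynomial

/-- `W` is an `α`-splitting subspace: the whole space is the internal direct sum
`W ⊕ αW ⊕ ⋯ ⊕ α^(n-1)W`. -/
def IsSplitting {F E : Type*} [Field F] [Field E] [Algebra F E]
    (n : ℕ) (α : E) (W : Submodule F E) : Prop :=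
  DirectSum.IsInternal (fun i : Fin n => α ^ (i : ℕ) • W)

section Aux

variable {F E : Type*} [Field F] [Field E] [Algebra F E]

/-- Multiplication by a nonzero scalar as an `F`-linear equivalence. -/
noncomputable def mulE (c : E) (hc : c ≠ 0) : E ≃ₗ[F] E :=
  LinearEquiv.ofLinear (DistribMulAction.toLinearMap F E c)
    (DistribMulAction.toLinearMap F E c⁻¹)
    (by ext y; simp [DistribMulAction.toLinearMap, ← mul_assoc, mul_inv_cancel₀ hc])
    (by ext y; simp [DistribMulAction.toLinearMap, ← mul_assoc, inv_mul_cancel₀ hc])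

lemma smul_eq_map_mulE (c : E) (hc : c ≠ 0) (W : Submodule F E) :
    c • W = W.map ((mulE c hc : E ≃ₗ[F] E) : E →ₗ[F] E) := rfl

lemma finrank_smul_eq (c : E) (hc : c ≠ 0) (W : Submodule F E) :
    Module.finrank F (c • W : Submodule F E) = Module.finrank F W := by
  rw [smul_eq_map_mulE c hc]
  exact LinearEquiv.finrank_map_eq (mulE c hc) W

lemma isSplitting_smul {n : ℕ} {α : E} {W : Submodule F E}
    (hW : IsSplitting n α W) (c : E) (hc : c ≠ 0) : IsSplitting n α (c • W) := by
  unfold IsSplitting at *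
  rw [DirectSum.isInternal_submodule_iff_iSupIndep_and_iSup_eq_top] at hW ⊢
  obtain ⟨h1, h2⟩ := hW
  have key : ∀ i : Fin n, α ^ (i : ℕ) • c • W =
      (Submodule.orderIsoMapComap (mulE c hc : E ≃ₗ[F] E)) (α ^ (i : ℕ) • W) := by
    intro i
    rw [smul_smul, mul_comm, ← smul_smul]
    exact smul_eq_map_mulE c hc _
  simp only [key]
  refine ⟨(iSupIndep_map_orderIso_iff _).mpr h1, ?_⟩
  rw [← OrderIso.map_iSup, h2]
  simp

lemma smul_smul_cancel {a b : E} (ha : a ≠ 0) (hb : b ≠ 0) (W : Submodule F E) :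
    (a * b⁻¹) • (b * a⁻¹) • W = W := by
  rw [smul_smul]
  have h : (a * b⁻¹) * (b * a⁻¹) = 1 := by field_simp
  rw [h, one_smul]

lemma mem_scale {y z : E} (hy : y ≠ 0) (W : Submodule F E) (hmem : y ∈ W) :
    z ∈ (z * y⁻¹) • W := by
  have h : (z * y⁻¹) • y = z := by
    rw [smul_eq_mul, mul_assoc, inv_mul_cancel₀ hy, mul_one]
  have h2 := Submodule.smul_mem_pointwise_smul y (z * y⁻¹) W hmem
  rwa [h] at h2

/-- Scaling gives a bijection between splitting subspaces containing `y` and those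
containing `z`. -/
noncomputable def scaleEquiv (m n : ℕ) (α : E) {y z : E} (hy : y ≠ 0) (hz : z ≠ 0) :
    {W : Submodule F E // Module.finrank F W = m ∧ IsSplitting n α W ∧ y ∈ W} ≃
      {W : Submodule F E // Module.finrank F W = m ∧ IsSplitting n α W ∧ z ∈ W} where
  toFun W := ⟨(z * y⁻¹) • W.1,
    by rw [finrank_smul_eq _ (mul_ne_zero hz (inv_ne_zero hy))]; exact W.2.1,
    isSplitting_smul W.2.2.1 _ (mul_ne_zero hz (inv_ne_zero hy)),
    mem_scale hy W.1 W.2.2.2⟩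
  invFun W := ⟨(y * z⁻¹) • W.1,
    by rw [finrank_smul_eq _ (mul_ne_zero hy (inv_ne_zero hz))]; exact W.2.1,
    isSplitting_smul W.2.2.1 _ (mul_ne_zero hy (inv_ne_zero hz)),
    mem_scale hz W.1 W.2.2.2⟩
  left_inv W := Subtype.ext (smul_smul_cancel hy hz W.1)
  right_inv W := Subtype.ext (smul_smul_cancel hz hy W.1)

lemma indep_span_blocks {M ι κ : Type*} [AddCommGroup M] [Module F M]
    {v : ι → M} (hv : LinearIndependent F v) {s : κ → Set ι}
    (hs : Pairwise (Function.onFun Disjoint s)) :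
    iSupIndep fun k => Submodule.span F (v '' s k) := by
  intro k
  have h1 : (⨆ (j) (_ : j ≠ k), Submodule.span F (v '' s j)) =
      Submodule.span F (v '' ⋃ (j) (_ : j ≠ k), s j) := by
    rw [Set.image_iUnion₂, Submodule.span_iUnion₂]
  rw [h1]
  apply hv.disjoint_span_image
  rw [Set.disjoint_iUnion₂_right]
  intro j hj
  exact hs (Ne.symm hj)

lemma exists_splitting (m n : ℕ) (hm : 0 < m) (hn : 0 < n)
    (hdim : Module.finrank F E = m * n)
    (α : E) (hα : Algebra.adjoin F {α} = ⊤) :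
    ∃ W : Submodule F E, Module.finrank F W = m ∧ IsSplitting n α W ∧ (1 : E) ∈ W := by
  haveI : FiniteDimensional F E := FiniteDimensional.of_finrank_pos
    (hdim ▸ Nat.mul_pos hm hn)
  have hint : IsIntegral F α := IsIntegral.of_finite F α
  let pb : PowerBasis F E := (Algebra.adjoin.powerBasis hint).map
    ((Subalgebra.equivOfEq _ _ hα).trans Subalgebra.topEquiv)
  have hgen : pb.gen = α := rfl
  have hpbdim : pb.dim = m * n := by rw [← pb.finrank, hdim]
  let b : Module.Basis (Fin (m * n)) F E := pb.basis.reindex (finCongr hpbdim)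
  have hb : ∀ k : Fin (m * n), b k = α ^ (k : ℕ) := by
    intro k
    simp [b, Module.Basis.reindex_apply, pb.basis_eq_pow, hgen]
  have hlt : ∀ (i : Fin n) (j : Fin m), (j : ℕ) * n + (i : ℕ) < m * n := by
    intro i j
    have h1 : (j : ℕ) * n + (i : ℕ) < ((j : ℕ) + 1) * n := by
      rw [add_mul, one_mul]; exact Nat.add_lt_add_left i.isLt _
    exact lt_of_lt_of_le h1 (mul_le_mul_left j.isLt n)
  let f : Fin n → Fin m → Fin (m * n) := fun i j => ⟨(j : ℕ) * n + (i : ℕ), hlt i j⟩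
  let v : Fin m → E := fun j => α ^ ((j : ℕ) * n)
  let W : Submodule F E := Submodule.span F (Set.range v)
  have hvb : v = b ∘ (f ⟨0, hn⟩) := by
    funext j; simp [v, f, hb]
  have hWi : ∀ i : Fin n, α ^ (i : ℕ) • W = Submodule.span F (b '' Set.range (f i)) := by
    intro i
    rw [Submodule.smul_span]
    congr 1
    rw [Set.smul_set_range, ← Set.range_comp]
    have hfun : (fun j : Fin m => α ^ (i : ℕ) • v j) = ⇑b ∘ f i := by
      funext j
      simp only [Function.comp_apply, smul_eq_mul, v, f, hb]
      rw [← pow_add, add_comm]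
    rw [hfun]
  have hdisj : Pairwise (Function.onFun Disjoint fun i : Fin n => Set.range (f i)) := by
    intro i i' hii'
    rw [Function.onFun, Set.disjoint_left]
    rintro a ⟨j, rfl⟩ ⟨j', hj'⟩
    apply hii'
    have hval : (j' : ℕ) * n + (i' : ℕ) = (j : ℕ) * n + (i : ℕ) := congrArg Fin.val hj'
    have h4 : n * (j' : ℕ) + (i' : ℕ) = n * (j : ℕ) + (i : ℕ) := by
      rw [mul_comm n, mul_comm n]; exact hval
    have h5 : (i' : ℕ) = (i : ℕ) := by
      have h6 := congrArg (· % n) h4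
      simpa [Nat.mul_add_mod, Nat.mod_eq_of_lt i.isLt, Nat.mod_eq_of_lt i'.isLt] using h6
    exact Fin.ext h5.symm
  have hcover : (⋃ i : Fin n, Set.range (f i)) = Set.univ := by
    ext k
    simp only [Set.mem_iUnion, Set.mem_range, Set.mem_univ, iff_true]
    have hj0 : (k : ℕ) / n < m := (Nat.div_lt_iff_lt_mul hn).mpr k.isLt
    refine ⟨⟨(k : ℕ) % n, Nat.mod_lt _ hn⟩, ⟨⟨(k : ℕ) / n, hj0⟩, ?_⟩⟩
    apply Fin.ext
    show (k : ℕ) / n * n + (k : ℕ) % n = (k : ℕ)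
    rw [mul_comm]
    exact Nat.div_add_mod _ _
  have hsplit : IsSplitting n α W := by
    unfold IsSplitting
    rw [DirectSum.isInternal_submodule_iff_iSupIndep_and_iSup_eq_top]
    constructor
    · simp only [hWi]
      exact indep_span_blocks b.linearIndependent hdisj
    · simp only [hWi]
      rw [← Submodule.span_iUnion, ← Set.image_iUnion, hcover, Set.image_univ, b.span_eq]
  have hrank : Module.finrank F W = m := by
    have hli : LinearIndependent F v := by
      rw [hvb]
      exact b.linearIndependent.comp _ (fun a a' h => by
        have h2 : (a : ℕ) * n = (a' : ℕ) * n := by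
          have := congrArg Fin.val h
          simpa [f] using this
        exact Fin.ext (Nat.eq_of_mul_eq_mul_right hn h2))
    rw [show W = Submodule.span F (Set.range v) from rfl]
    rw [finrank_span_eq_card hli, Fintype.card_fin]
  exact ⟨W, hrank, hsplit, Submodule.subset_span ⟨⟨0, hm⟩, by simp [v]⟩⟩

end Aux

theorem stmt16 (F E : Type*) [Field F] [Fintype F] [Field E] [Algebra F E]
    (q m n : ℕ) (hq : q = Fintype.card F) (hm : 0 < m) (hn : 0 < n)
    (hdim : Module.finrank F E = m * n)
    (α : E) (hα : Algebra.adjoin F {α} = ⊤) (x : E) (hx : x ≠ 0) :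
    Nonempty {W : Submodule F E // Module.finrank F W = m ∧ IsSplitting n α W ∧ x ∈ W} ∧
    Nat.card {W : Submodule F E // Module.finrank F W = m ∧ IsSplitting n α W} =
      Nat.card {W : Submodule F E // Module.finrank F W = m ∧ IsSplitting n α W ∧ x ∈ W} *
        ((q ^ (m * n) - 1) / (q ^ m - 1)) := by
  classical
  haveI : FiniteDimensional F E := FiniteDimensional.of_finrank_pos
    (hdim ▸ Nat.mul_pos hm hn)
  haveI : Finite E := Module.finite_of_finite F
  haveI : Fintype E := Fintype.ofFinite E
  haveI : Finite (Submodule F E) :=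
    Finite.of_injective (fun W : Submodule F E => (W : Set E)) SetLike.coe_injective
  haveI : Fintype (Submodule F E) := Fintype.ofFinite _
  -- nonemptiness
  obtain ⟨W₀, hW₀r, hW₀s, hW₀1⟩ := exists_splitting m n hm hn hdim α hα
  have hne : Nonempty {W : Submodule F E //
      Module.finrank F W = m ∧ IsSplitting n α W ∧ x ∈ W} := by
    refine ⟨⟨x • W₀, ?_, isSplitting_smul hW₀s x hx, ?_⟩⟩
    · rw [finrank_smul_eq x hx]; exact hW₀r
    · have h := Submodule.smul_mem_pointwise_smul 1 x W₀ hW₀1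
      simpa using h
  refine ⟨hne, ?_⟩
  -- counting
  have hq2 : 1 < q := by rw [hq]; exact Fintype.one_lt_card
  have hcardE : Fintype.card E = q ^ (m * n) := by
    rw [Module.card_eq_pow_finrank (K := F) (V := E), hdim, hq]
  -- fiber cardinalities
  have hfiber : ∀ W : Submodule F E, Module.finrank F W = m →
      Fintype.card {y : E // y ∈ W ∧ y ≠ 0} = q ^ m - 1 := by
    intro W hW
    have e : {y : E // y ∈ W ∧ y ≠ 0} ≃ {y : W // ¬ (y = 0)} :=
      { toFun := fun y => ⟨⟨y.1, y.2.1⟩, fun h => y.2.2 (congrArg Subtype.val h)⟩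
        invFun := fun y => ⟨y.1.1, y.1.2, fun h => y.2 (Subtype.ext h)⟩
        left_inv := fun y => rfl
        right_inv := fun y => rfl }
    have hcardW : Fintype.card W = q ^ m := by
      rw [Module.card_eq_pow_finrank (K := F) (V := W), hW, hq]
    rw [Fintype.card_congr e, Fintype.card_subtype_compl, hcardW, Fintype.card_subtype_eq]
  have hNZ : Fintype.card {y : E // ¬ (y = 0)} = q ^ (m * n) - 1 := by
    rw [Fintype.card_subtype_compl, hcardE, Fintype.card_subtype_eq]
  -- the double counting
  set T := {W : Submodule F E // Module.finrank F W = m ∧ IsSplitting n α W} with hT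
  set Pair := {p : Submodule F E × E //
    (Module.finrank F p.1 = m ∧ IsSplitting n α p.1) ∧ p.2 ∈ p.1 ∧ p.2 ≠ 0} with hPair
  have e1 : Pair ≃ Σ W : T, {y : E // y ∈ W.1 ∧ y ≠ 0} :=
    { toFun := fun p => ⟨⟨p.1.1, p.2.1⟩, ⟨p.1.2, p.2.2⟩⟩
      invFun := fun s => ⟨⟨s.1.1, s.2.1⟩, s.1.2, s.2.2⟩
      left_inv := fun p => rfl
      right_inv := fun s => by rcases s with ⟨⟨W, hW⟩, ⟨y, hy⟩⟩; rfl }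
  have e2 : Pair ≃ Σ y : {y : E // ¬ (y = 0)},
      {W : Submodule F E // Module.finrank F W = m ∧ IsSplitting n α W ∧ y.1 ∈ W} :=
    { toFun := fun p => ⟨⟨p.1.2, p.2.2.2⟩, ⟨p.1.1, p.2.1.1, p.2.1.2, p.2.2.1⟩⟩
      invFun := fun s => ⟨⟨s.2.1, s.1.1⟩, ⟨s.2.2.1, s.2.2.2.1⟩, s.2.2.2.2, s.1.2⟩
      left_inv := fun p => rfl
      right_inv := fun s => by rcases s with ⟨⟨y, hy⟩, ⟨W, hW⟩⟩; rfl }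
  have hcount1 : Fintype.card Pair = Fintype.card T * (q ^ m - 1) := by
    rw [Fintype.card_congr e1, Fintype.card_sigma]
    rw [Finset.sum_congr rfl (fun W _ => hfiber W.1 W.2.1)]
    rw [Finset.sum_const, smul_eq_mul, Finset.card_univ]
  have hkey : ∀ y : E, y ≠ 0 →
      Fintype.card {W : Submodule F E //
        Module.finrank F W = m ∧ IsSplitting n α W ∧ y ∈ W} =
      Fintype.card {W : Submodule F E //
        Module.finrank F W = m ∧ IsSplitting n α W ∧ x ∈ W} := by
    intro y hy
    exact Fintype.card_congr (scaleEquiv m n α hy hx)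
  have hcount2 : Fintype.card Pair = (q ^ (m * n) - 1) *
      Fintype.card {W : Submodule F E //
        Module.finrank F W = m ∧ IsSplitting n α W ∧ x ∈ W} := by
    rw [Fintype.card_congr e2, Fintype.card_sigma]
    rw [Finset.sum_congr rfl (fun y _ => hkey y.1 y.2)]
    rw [Finset.sum_const, smul_eq_mul, Finset.card_univ, hNZ]
  have hB : Fintype.card T * (q ^ m - 1) = (q ^ (m * n) - 1) *
      Fintype.card {W : Submodule F E //
        Module.finrank F W = m ∧ IsSplitting n α W ∧ x ∈ W} := by
    rw [← hcount1, ← hcount2]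
  have hdvd : (q ^ m - 1) ∣ (q ^ (m * n) - 1) := by
    rw [pow_mul]
    simpa using Nat.sub_dvd_pow_sub_pow (q ^ m) 1 n
  have hpos : 0 < q ^ m - 1 := by
    have h1 : 1 < q ^ m := Nat.one_lt_pow hm.ne' hq2
    omega
  rw [Nat.card_eq_fintype_card, Nat.card_eq_fintype_card]
  apply Nat.eq_of_mul_eq_mul_right hpos
  rw [hB, mul_assoc, Nat.div_mul_cancel hdvd, mul_comm]
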